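/- Let q be a prime power and let N be an s×n matrix over F_q (s ≤ n). Then the map x ↦ xN from F_q^s to F_q^n defines a linear (t,s,n,q)-rectangular AONT if and only if every s×s submatrix of N is invertible and every (s−t)×(s−t) submatrix of N is invertible. -/

import Mathlib

/-- An array `A` is unbiased with respect to a set `D` of columns if every tuple of values
on `D` occurs in exactly `(number of rows) / v ^ |D|` rows. -/
def IsUnbiased {R : Type*} [Fintype R] {k : ℕ} {Γ : Type*} [DecidableEq Γ]
    (v : ℕ) (A : R → Fin k → Γ) (D : Finset (Fin k)) : Prop :=
  ∀ f : Fin k → Γ,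
    (Finset.univ.filter (fun r => ∀ c ∈ D, A r c = f c)).card = Fintype.card R / v ^ D.card

/-- A (t,s,n,v)-rectangular AONT: an array on s+n columns (the first s are "input" columns,
the last n are "output" columns) unbiased w.r.t. (1) the first s columns, (2) any s of the
last n columns, and (3) any t input columns together with any s−t output columns. -/
def IsRecAONT {R : Type*} [Fintype R] {Γ : Type*} [DecidableEq Γ]
    (v s n t : ℕ) (A : R → Fin (s + n) → Γ) : Prop :=
  IsUnbiased v A (Finset.univ.filter (fun j : Fin (s + n) => (j : ℕ) < s)) ∧
  (∀ J ⊆ Finset.univ.filter (fun j : Fin (s + n) => s ≤ (j : ℕ)),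
      J.card = s → IsUnbiased v A J) ∧
  (∀ I ⊆ Finset.univ.filter (fun j : Fin (s + n) => (j : ℕ) < s),
    ∀ J ⊆ Finset.univ.filter (fun j : Fin (s + n) => s ≤ (j : ℕ)),
      I.card = t → J.card = s - t → IsUnbiased v A (I ∪ J))


namespace Stmt10Aux

set_option linter.unusedSectionVars false

variable {s n : ℕ} {F : Type*} [Field F] [Fintype F] [DecidableEq F]

def arr (N : Matrix (Fin s) (Fin n) F) : (Fin s → F) → Fin (s + n) → F :=
  fun x j => if h : (j : ℕ) < s then x ⟨j, h⟩
    else Matrix.vecMul x N ⟨(j : ℕ) - s, by have := j.isLt; omega⟩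

def Bmat (N : Matrix (Fin s) (Fin n) F) : Matrix (Fin s) (Fin (s + n)) F :=
  fun k c => if h : (c : ℕ) < s then (if (k : ℕ) = (c : ℕ) then 1 else 0)
    else N k ⟨(c : ℕ) - s, by have := c.isLt; omega⟩

lemma arr_eq (N : Matrix (Fin s) (Fin n) F) (x : Fin s → F) (c : Fin (s + n)) :
    arr N x c = Matrix.vecMul x (Bmat N) c := by
  by_cases h : (c : ℕ) < s
  · simp only [arr, Bmat, Matrix.vecMul, dotProduct, h, dif_pos]
    rw [Finset.sum_eq_single (⟨(c : ℕ), h⟩ : Fin s)]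
    · simp
    · intro b _ hb
      rw [if_neg, mul_zero]
      exact fun hc => hb (Fin.ext hc)
    · simp
  · simp only [arr, Bmat, Matrix.vecMul, dotProduct, h, dif_neg, not_false_iff]

lemma filter_card_one {α : Type*} [Fintype α] {p : α → Prop} [DecidablePred p] :
    (Finset.univ.filter p).card = 1 ↔ ∃! a, p a := by
  rw [Finset.card_eq_one]
  constructor
  · rintro ⟨a, ha⟩
    have h : ∀ b, p b ↔ b = a := by
      intro b
      rw [← Finset.mem_singleton, ← ha, Finset.mem_filter]
      simp
    exact ⟨a, (h a).2 rfl, fun b hb => (h b).1 hb⟩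
  · rintro ⟨a, ha, hu⟩
    refine ⟨a, ?_⟩
    ext b
    simp only [Finset.mem_filter, Finset.mem_univ, true_and, Finset.mem_singleton]
    exact ⟨fun hb => hu b hb, fun hb => hb ▸ ha⟩

lemma key {q : ℕ} (hq : Fintype.card F = q) (N : Matrix (Fin s) (Fin n) F)
    {κ : Type} [Fintype κ] [DecidableEq κ] (e : κ ≃ Fin s)
    (σ : κ → Fin (s + n)) (hinj : Function.Injective σ)
    {D : Finset (Fin (s + n))} (hmem : ∀ i, σ i ∈ D) (hD : D.card = s) :
    IsUnbiased q (arr N) D ↔ IsUnit ((Bmat N).submatrix ⇑e σ).det := by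
  classical
  have hcardκ : Fintype.card κ = s := by rw [Fintype.card_congr e, Fintype.card_fin]
  have hq0 : 0 < q := hq ▸ Fintype.card_pos
  have hcardR : Fintype.card (Fin s → F) = q ^ s := by
    rw [Fintype.card_fun, hq, Fintype.card_fin]
  have himg : Finset.univ.image σ = D := by
    apply Finset.eq_of_subset_of_card_le
    · intro x hx
      obtain ⟨i, _, rfl⟩ := Finset.mem_image.mp hx
      exact hmem i
    · rw [Finset.card_image_of_injective _ hinj, Finset.card_univ, hcardκ, hD]
  set M := (Bmat N).submatrix ⇑e σ with hM
  have hvec : ∀ (x : Fin s → F) (j : κ),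
      Matrix.vecMul (x ∘ e) M j = Matrix.vecMul x (Bmat N) (σ j) := by
    intro x j
    simp only [Matrix.vecMul, dotProduct, hM, Matrix.submatrix_apply,
      Function.comp_apply]
    exact Fintype.sum_equiv e _ _ (fun k => rfl)
  have step1 : IsUnbiased q (arr N) D ↔
      ∀ f : Fin (s + n) → F, ∃! x : Fin s → F, ∀ c ∈ D, arr N x c = f c := by
    unfold IsUnbiased
    rw [hD, hcardR, Nat.div_self (pow_pos hq0 s)]
    exact forall_congr' fun f => filter_card_one
  have step2 : ∀ (x : Fin s → F) (f : Fin (s + n) → F),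
      (∀ c ∈ D, arr N x c = f c) ↔ Matrix.vecMul (x ∘ e) M = f ∘ σ := by
    intro x f
    rw [funext_iff]
    constructor
    · intro h j
      rw [hvec, ← arr_eq]
      exact h (σ j) (hmem j)
    · intro h c hc
      rw [← himg, Finset.mem_image] at hc
      obtain ⟨j, _, rfl⟩ := hc
      rw [arr_eq, ← hvec]
      exact h j
  rw [step1]
  have step3 : (∀ f : Fin (s + n) → F, ∃! x : Fin s → F, ∀ c ∈ D, arr N x c = f c) ↔
      ∀ y : κ → F, ∃! z : κ → F, Matrix.vecMul z M = y := by
    constructor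
    · intro h y
      obtain ⟨x, hx, hu⟩ := h (fun c => if hc : ∃ j, σ j = c then y hc.choose else 0)
      have hf : ∀ j, (fun c => if hc : ∃ j, σ j = c then y hc.choose else 0) (σ j) = y j := by
        intro j
        have hj : ∃ j', σ j' = σ j := ⟨j, rfl⟩
        simp only [hj, dif_pos]
        exact congrArg y (hinj hj.choose_spec)
      refine ⟨x ∘ e, ?_, ?_⟩
      · show Matrix.vecMul (x ∘ ⇑e) M = y
        rw [(step2 x _).mp hx]
        exact funext hf
      · intro z hz
        replace hz : Matrix.vecMul z M = y := hz
        have hze : (z ∘ ⇑e.symm) ∘ ⇑e = z := by ext k; simp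
        have : z ∘ e.symm = x := by
          apply hu
          show ∀ c ∈ D, arr N (z ∘ ⇑e.symm) c = _
          rw [step2, hze, hz]
          exact (funext hf).symm
        rw [← this]
        ext k; simp
    · intro h f
      obtain ⟨z, hz, hu⟩ := h (f ∘ σ)
      refine ⟨z ∘ e.symm, ?_, ?_⟩
      · show ∀ c ∈ D, arr N (z ∘ ⇑e.symm) c = f c
        rw [step2]
        have : (z ∘ ⇑e.symm) ∘ ⇑e = z := by ext k; simp
        rw [this, hz]
      · intro x hx
        replace hx : ∀ c ∈ D, arr N x c = f c := hx
        rw [step2] at hx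
        have := hu _ hx
        rw [← this]
        ext k; simp
  rw [step3]
  have step4 : (∀ y : κ → F, ∃! z : κ → F, Matrix.vecMul z M = y) ↔
      Function.Bijective M.vecMul := (Function.bijective_iff_existsUnique _).symm
  rw [step4, ← Matrix.isUnit_iff_isUnit_det]
  exact ⟨fun h => Matrix.vecMul_injective_iff_isUnit.mp h.injective,
    fun h => ⟨Matrix.vecMul_injective_iff_isUnit.mpr h,
      Matrix.vecMul_surjective_iff_isUnit.mpr h⟩⟩

lemma matEq {t t' : ℕ} (N : Matrix (Fin s) (Fin n) F)
    (ρI : Fin t → Fin s) (ρC : Fin t' → Fin s)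
    (σI : Fin t → Fin (s + n)) (σJ : Fin t' → Fin (s + n)) (c : Fin t' → Fin n)
    (hσI : ∀ a, (σI a : ℕ) = ρI a) (hσJ : ∀ b, (σJ b : ℕ) = s + c b)
    (hI : Function.Injective ρI) (hd : ∀ a b, ρI a ≠ ρC b) :
    (Bmat N).submatrix (Sum.elim ρI ρC) (Sum.elim σI σJ)
      = Matrix.fromBlocks 1 (fun a b => N (ρI a) (c b)) 0 (N.submatrix ρC c) := by
  ext a b
  cases a with
  | inl a =>
    cases b with
    | inl b =>
      have hlt : ((σI b : Fin (s + n)) : ℕ) < s := by rw [hσI]; exact (ρI b).isLt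
      show Bmat N (ρI a) (σI b) = (1 : Matrix (Fin t) (Fin t) F) a b
      simp only [Bmat]
      rw [dif_pos hlt, Matrix.one_apply]
      by_cases hab : a = b
      · subst hab
        rw [if_pos rfl, if_pos (hσI a).symm]
      · rw [if_neg hab, if_neg]
        intro hval
        rw [hσI] at hval
        exact hab (hI (Fin.ext hval))
    | inr b =>
      have hlt : ¬ ((σJ b : Fin (s + n)) : ℕ) < s := by rw [hσJ]; omega
      show Bmat N (ρI a) (σJ b) = N (ρI a) (c b)
      simp only [Bmat]
      rw [dif_neg hlt]
      congr 1
      apply Fin.ext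
      show ((σJ b : Fin (s + n)) : ℕ) - s = (c b : ℕ)
      have := hσJ b
      omega
  | inr a =>
    cases b with
    | inl b =>
      have hlt : ((σI b : Fin (s + n)) : ℕ) < s := by rw [hσI]; exact (ρI b).isLt
      show Bmat N (ρC a) (σI b) = (0 : Matrix (Fin t') (Fin t) F) a b
      simp only [Bmat]
      rw [dif_pos hlt, Matrix.zero_apply, if_neg]
      intro hval
      rw [hσI] at hval
      exact hd b a (Fin.ext hval.symm)
    | inr b =>
      have hlt : ¬ ((σJ b : Fin (s + n)) : ℕ) < s := by rw [hσJ]; omega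
      show Bmat N (ρC a) (σJ b) = N (ρC a) (c b)
      simp only [Bmat]
      rw [dif_neg hlt]
      congr 1
      apply Fin.ext
      show ((σJ b : Fin (s + n)) : ℕ) - s = (c b : ℕ)
      have := hσJ b
      omega

lemma filter_lt_card : (Finset.univ.filter (fun j : Fin (s + n) => (j : ℕ) < s)).card = s := by
  have h : Finset.univ.filter (fun j : Fin (s + n) => (j : ℕ) < s)
      = Finset.univ.image (fun i : Fin s => (⟨(i : ℕ), by omega⟩ : Fin (s + n))) := by
    ext j
    simp only [Finset.mem_filter, Finset.mem_univ, true_and, Finset.mem_image]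
    constructor
    · intro hj; exact ⟨⟨(j : ℕ), hj⟩, Fin.ext rfl⟩
    · rintro ⟨i, _, rfl⟩; exact i.isLt
  rw [h, Finset.card_image_of_injective, Finset.card_univ, Fintype.card_fin]
  intro a b hab
  simpa [Fin.ext_iff] using hab

lemma key3 {q t t' : ℕ} (hq : Fintype.card F = q) (N : Matrix (Fin s) (Fin n) F)
    (htt' : t + t' = s)
    (ρI : Fin t → Fin s) (ρC : Fin t' → Fin s) (c : Fin t' → Fin n)
    (hρI : Function.Injective ρI) (hρC : Function.Injective ρC)
    (hc : Function.Injective c) (hd : ∀ a b, ρI a ≠ ρC b)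
    {D : Finset (Fin (s + n))}
    (hmem1 : ∀ a : Fin t,
      (⟨(ρI a : ℕ), by have := (ρI a).isLt; omega⟩ : Fin (s + n)) ∈ D)
    (hmem2 : ∀ b : Fin t',
      (⟨s + (c b : ℕ), by have := (c b).isLt; omega⟩ : Fin (s + n)) ∈ D)
    (hD : D.card = s) :
    IsUnbiased q (arr N) D ↔ IsUnit (N.submatrix ρC c).det := by
  have hginj : Function.Injective (Sum.elim ρI ρC) := by
    rintro (a|a) (b|b) hab
    · exact congrArg Sum.inl (hρI hab)
    · exact absurd hab (hd a b)
    · exact absurd hab.symm (hd b a)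
    · exact congrArg Sum.inr (hρC hab)
  have hgbij : Function.Bijective (Sum.elim ρI ρC) :=
    (Fintype.bijective_iff_injective_and_card _).mpr ⟨hginj, by simp [htt']⟩
  have hσinj : Function.Injective
      (Sum.elim
        (fun a : Fin t => (⟨(ρI a : ℕ), by have := (ρI a).isLt; omega⟩ : Fin (s + n)))
        (fun b : Fin t' => (⟨s + (c b : ℕ), by have := (c b).isLt; omega⟩ : Fin (s + n)))) := by
    rintro (a|a) (b|b) hab <;>
      simp only [Sum.elim_inl, Sum.elim_inr, Fin.mk.injEq] at hab
    · exact congrArg Sum.inl (hρI (Fin.ext hab))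
    · exact absurd hab (by have := (ρI a).isLt; omega)
    · exact absurd hab (by have := (ρI b).isLt; omega)
    · exact congrArg Sum.inr (hc (Fin.ext (by omega)))
  rw [key hq N (Equiv.ofBijective _ hgbij) _ hσinj
    (fun i => by rcases i with a | b; exacts [hmem1 a, hmem2 b]) hD]
  have hmat := matEq N ρI ρC
    (fun a : Fin t => (⟨(ρI a : ℕ), by have := (ρI a).isLt; omega⟩ : Fin (s + n)))
    (fun b : Fin t' => (⟨s + (c b : ℕ), by have := (c b).isLt; omega⟩ : Fin (s + n)))
    c (fun a => rfl) (fun b => rfl) hρI hd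
  rw [show ⇑(Equiv.ofBijective _ hgbij) = Sum.elim ρI ρC from rfl, hmat,
    Matrix.det_fromBlocks_zero₂₁ 1 (fun a b => N (ρI a) (c b)) (N.submatrix ρC c), Matrix.det_one, one_mul]

end Stmt10Aux

/-- For an s×n matrix N over F_q (s ≤ n), the map x ↦ xN defines a linear
(t,s,n,q)-rectangular AONT (i.e., the q^s × (s+n) array with rows (x, xN) is a
(t,s,n,q)-recAONT) if and only if every s×s submatrix of N is invertible and every
(s−t)×(s−t) submatrix of N is invertible. -/
theorem stmt10 {q s n t : ℕ} (F : Type*) [Field F] [Fintype F] [DecidableEq F]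
    (hq : Fintype.card F = q) (hsn : s ≤ n) (ht1 : 1 ≤ t) (hts : t ≤ s)
    (N : Matrix (Fin s) (Fin n) F) :
    IsRecAONT q s n t
      (fun (x : Fin s → F) (j : Fin (s + n)) =>
        if h : (j : ℕ) < s then x ⟨j, h⟩
        else Matrix.vecMul x N ⟨(j : ℕ) - s, by have := j.isLt; omega⟩) ↔
    ((∀ c : Fin s → Fin n, Function.Injective c →
        IsUnit ((N.submatrix id c).det)) ∧
     (∀ (r : Fin (s - t) → Fin s) (c : Fin (s - t) → Fin n),
        Function.Injective r → Function.Injective c →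
        IsUnit ((N.submatrix r c).det))) := by
  classical
  show IsRecAONT q s n t (Stmt10Aux.arr N) ↔ _
  constructor
  · rintro ⟨h1, h2, h3⟩
    constructor
    · -- every s×s submatrix invertible
      intro c hc
      have hσinj : Function.Injective
          (fun b : Fin s => (⟨s + (c b : ℕ), by have := (c b).isLt; omega⟩ : Fin (s + n))) := by
        intro a b hab
        simp only [Fin.mk.injEq] at hab
        exact hc (Fin.ext (by omega))
      set D : Finset (Fin (s + n)) := Finset.univ.image
        (fun b : Fin s => (⟨s + (c b : ℕ), by have := (c b).isLt; omega⟩ : Fin (s + n))) with hDdef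
      have hD : D.card = s := by
        rw [hDdef, Finset.card_image_of_injective _ hσinj, Finset.card_univ, Fintype.card_fin]
      have hsub : D ⊆ Finset.univ.filter (fun j : Fin (s + n) => s ≤ (j : ℕ)) := by
        intro x hx
        rw [hDdef, Finset.mem_image] at hx
        obtain ⟨b, _, rfl⟩ := hx
        simp only [Finset.mem_filter, Finset.mem_univ, true_and]
        exact Nat.le_add_right s _
      have hunb := h2 D hsub hD
      rw [Stmt10Aux.key3 hq N (by omega : 0 + s = s) Fin.elim0 id c
        (fun a => a.elim0) Function.injective_id hc (fun a => a.elim0)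
        (fun a => a.elim0)
        (fun b => by rw [hDdef]; exact Finset.mem_image_of_mem _ (Finset.mem_univ b)) hD] at hunb
      exact hunb
    · -- every (s-t)×(s-t) submatrix invertible
      intro r c hr hc
      have hRngcard : (Finset.univ.image r)ᶜ.card = t := by
        rw [Finset.card_compl, Finset.card_image_of_injective _ hr, Finset.card_univ,
          Fintype.card_fin, Fintype.card_fin]
        omega
      set ρI : Fin t → Fin s :=
        fun a => (((Finset.univ.image r)ᶜ.orderIsoOfFin hRngcard a : _) : Fin s) with hρIdef
      have hρI : Function.Injective ρI := fun a b hab =>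
        ((Finset.univ.image r)ᶜ.orderIsoOfFin hRngcard).injective (Subtype.ext hab)
      have hρImem : ∀ a, ρI a ∈ (Finset.univ.image r)ᶜ :=
        fun a => ((Finset.univ.image r)ᶜ.orderIsoOfFin hRngcard a).2
      have hd : ∀ a b, ρI a ≠ r b := by
        intro a b hab
        have h1 := hρImem a
        rw [Finset.mem_compl] at h1
        exact h1 (hab ▸ Finset.mem_image_of_mem r (Finset.mem_univ b))
      set σI : Fin t → Fin (s + n) :=
        fun a => (⟨(ρI a : ℕ), by have := (ρI a).isLt; omega⟩ : Fin (s + n)) with hσIdef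
      set σJ : Fin (s - t) → Fin (s + n) :=
        fun b => (⟨s + (c b : ℕ), by have := (c b).isLt; omega⟩ : Fin (s + n)) with hσJdef
      have hσIinj : Function.Injective σI := by
        intro a b hab
        rw [hσIdef] at hab
        simp only [Fin.mk.injEq] at hab
        exact hρI (Fin.ext hab)
      have hσJinj : Function.Injective σJ := by
        intro a b hab
        rw [hσJdef] at hab
        simp only [Fin.mk.injEq] at hab
        exact hc (Fin.ext (by omega))
      set I : Finset (Fin (s + n)) := Finset.univ.image σI with hIdef
      set J : Finset (Fin (s + n)) := Finset.univ.image σJ with hJdef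
      have hIcard : I.card = t := by
        rw [hIdef, Finset.card_image_of_injective _ hσIinj, Finset.card_univ, Fintype.card_fin]
      have hJcard : J.card = s - t := by
        rw [hJdef, Finset.card_image_of_injective _ hσJinj, Finset.card_univ, Fintype.card_fin]
      have hIsub : I ⊆ Finset.univ.filter (fun j : Fin (s + n) => (j : ℕ) < s) := by
        intro x hx
        rw [hIdef, Finset.mem_image] at hx
        obtain ⟨a, _, rfl⟩ := hx
        simp only [Finset.mem_filter, Finset.mem_univ, true_and, hσIdef]
        exact (ρI a).isLt
      have hJsub : J ⊆ Finset.univ.filter (fun j : Fin (s + n) => s ≤ (j : ℕ)) := by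
        intro x hx
        rw [hJdef, Finset.mem_image] at hx
        obtain ⟨b, _, rfl⟩ := hx
        simp only [Finset.mem_filter, Finset.mem_univ, true_and, hσJdef]
        exact Nat.le_add_right s _
      have hdisj : Disjoint I J := by
        rw [Finset.disjoint_left]
        intro x hxI hxJ
        have h1 := hIsub hxI
        have h2 := hJsub hxJ
        simp only [Finset.mem_filter] at h1 h2
        omega
      have hD : (I ∪ J).card = s := by
        rw [Finset.card_union_of_disjoint hdisj, hIcard, hJcard]
        omega
      have hunb := h3 I hIsub J hJsub hIcard hJcard
      rw [Stmt10Aux.key3 hq N (by omega : t + (s - t) = s) ρI r c hρI hr hc hd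
        (fun a => Finset.mem_union_left _ (Finset.mem_image_of_mem _ (Finset.mem_univ a)))
        (fun b => Finset.mem_union_right _ (Finset.mem_image_of_mem _ (Finset.mem_univ b)))
        hD] at hunb
      exact hunb
  · rintro ⟨hA, hB⟩
    refine ⟨?_, ?_, ?_⟩
    · -- condition 1
      rw [Stmt10Aux.key3 hq N (by omega : s + 0 = s) id Fin.elim0 Fin.elim0
        Function.injective_id (fun a => a.elim0) (fun a => a.elim0) (fun a b => b.elim0)
        (fun a => by simp) (fun b => b.elim0) Stmt10Aux.filter_lt_card]
      simp [Matrix.det_fin_zero]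
    · -- condition 2
      intro J hJsub hJcard
      set υ : Fin s → Fin (s + n) := fun b => ((J.orderIsoOfFin hJcard b : _) : Fin (s + n))
        with hυdef
      have hυmem : ∀ b, υ b ∈ J := fun b => (J.orderIsoOfFin hJcard b).2
      have hυge : ∀ b, s ≤ (υ b : ℕ) := by
        intro b
        have := hJsub (hυmem b)
        simp only [Finset.mem_filter] at this
        exact this.2
      set c : Fin s → Fin n := fun b => ⟨(υ b : ℕ) - s, by have := (υ b).isLt; omega⟩ with hcdef
      have hcinj : Function.Injective c := by
        intro a b hab
        rw [hcdef] at hab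
        simp only [Fin.mk.injEq] at hab
        have ha := hυge a
        have hb := hυge b
        have : υ a = υ b := Fin.ext (by omega)
        exact (J.orderIsoOfFin hJcard).injective (Subtype.ext this)
      rw [Stmt10Aux.key3 hq N (by omega : 0 + s = s) Fin.elim0 id c
        (fun a => a.elim0) Function.injective_id hcinj (fun a => a.elim0)
        (fun a => a.elim0)
        (fun b => by
          have : (⟨s + (c b : ℕ), by have := (c b).isLt; omega⟩ : Fin (s + n)) = υ b := by
            apply Fin.ext
            show s + ((υ b : ℕ) - s) = (υ b : ℕ)
            have := hυge b
            omega
          rw [this]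
          exact hυmem b) hJcard]
      exact hA c hcinj
    · -- condition 3
      intro I hIsub J hJsub hIcard hJcard
      set τ : Fin t → Fin (s + n) := fun a => ((I.orderIsoOfFin hIcard a : _) : Fin (s + n))
        with hτdef
      have hτmem : ∀ a, τ a ∈ I := fun a => (I.orderIsoOfFin hIcard a).2
      have hτlt : ∀ a, (τ a : ℕ) < s := by
        intro a
        have := hIsub (hτmem a)
        simp only [Finset.mem_filter] at this
        exact this.2
      set ρI : Fin t → Fin s := fun a => ⟨(τ a : ℕ), hτlt a⟩ with hρIdef
      have hρIinj : Function.Injective ρI := by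
        intro a b hab
        rw [hρIdef] at hab
        simp only [Fin.mk.injEq] at hab
        exact (I.orderIsoOfFin hIcard).injective (Subtype.ext (Fin.ext hab))
      have hIcompl : (Finset.univ.image ρI)ᶜ.card = s - t := by
        rw [Finset.card_compl, Finset.card_image_of_injective _ hρIinj, Finset.card_univ,
          Fintype.card_fin, Fintype.card_fin]
      set ρC : Fin (s - t) → Fin s :=
        fun b => (((Finset.univ.image ρI)ᶜ.orderIsoOfFin hIcompl b : _) : Fin s) with hρCdef
      have hρCinj : Function.Injective ρC := fun a b hab =>
        ((Finset.univ.image ρI)ᶜ.orderIsoOfFin hIcompl).injective (Subtype.ext hab)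
      have hρCmem : ∀ b, ρC b ∈ (Finset.univ.image ρI)ᶜ :=
        fun b => ((Finset.univ.image ρI)ᶜ.orderIsoOfFin hIcompl b).2
      have hd : ∀ a b, ρI a ≠ ρC b := by
        intro a b hab
        have h1 := hρCmem b
        rw [Finset.mem_compl] at h1
        exact h1 (hab ▸ Finset.mem_image_of_mem ρI (Finset.mem_univ a))
      -- J enumeration
      set υ : Fin (s - t) → Fin (s + n) :=
        fun b => ((J.orderIsoOfFin hJcard b : _) : Fin (s + n)) with hυdef
      have hυmem : ∀ b, υ b ∈ J := fun b => (J.orderIsoOfFin hJcard b).2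
      have hυge : ∀ b, s ≤ (υ b : ℕ) := by
        intro b
        have := hJsub (hυmem b)
        simp only [Finset.mem_filter] at this
        exact this.2
      set c : Fin (s - t) → Fin n :=
        fun b => ⟨(υ b : ℕ) - s, by have := (υ b).isLt; omega⟩ with hcdef
      have hcinj : Function.Injective c := by
        intro a b hab
        rw [hcdef] at hab
        simp only [Fin.mk.injEq] at hab
        have ha := hυge a
        have hb := hυge b
        have : υ a = υ b := Fin.ext (by omega)
        exact (J.orderIsoOfFin hJcard).injective (Subtype.ext this)
      have hdisj : Disjoint I J := by
        rw [Finset.disjoint_left]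
        intro x hxI hxJ
        have hx1 := hIsub hxI
        have hx2 := hJsub hxJ
        simp only [Finset.mem_filter] at hx1 hx2
        omega
      have hD : (I ∪ J).card = s := by
        rw [Finset.card_union_of_disjoint hdisj, hIcard, hJcard]
        omega
      rw [Stmt10Aux.key3 hq N (by omega : t + (s - t) = s) ρI ρC c hρIinj hρCinj hcinj hd
        (fun a => by
          have : (⟨(ρI a : ℕ), by have := (ρI a).isLt; omega⟩ : Fin (s + n)) = τ a :=
            Fin.ext rfl
          rw [this]
          exact Finset.mem_union_left _ (hτmem a))
        (fun b => by
          have : (⟨s + (c b : ℕ), by have := (c b).isLt; omega⟩ : Fin (s + n)) = υ b := by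
            apply Fin.ext
            show s + ((υ b : ℕ) - s) = (υ b : ℕ)
            have := hυge b
            omega
          rw [this]
          exact Finset.mem_union_right _ (hυmem b)) hD]
      exact hB ρC c hρCinj hcinj
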